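/- Let a, b ∈ ℝ with 0 ≤ a ≤ e² and b > 0. Then for every y ≥ 0 there exists a unique x ∈ [0,∞) such that (1 + a·exp(-x/b))·x = y. -/

import Mathlib

open Real

private lemma key_ineq (t : ℝ) (ht : t ≠ 2) : (t - 1) * Real.exp (-t) < Real.exp (-2) := by
  have h : t - 2 + 1 < Real.exp (t - 2) := Real.add_one_lt_exp (by intro h; apply ht; linarith)
  have h2 := mul_lt_mul_of_pos_right (show t - 1 < Real.exp (t - 2) by linarith) (Real.exp_pos (-t))
  calc (t - 1) * Real.exp (-t) < Real.exp (t - 2) * Real.exp (-t) := h2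
    _ = Real.exp (-2) := by rw [← Real.exp_add]; ring_nf

theorem stmt_8 (a b : ℝ) (ha1 : 0 ≤ a) (ha2 : a ≤ Real.exp 1 ^ 2) (hb : 0 < b)
    (y : ℝ) (hy : 0 ≤ y) :
    ∃! x : ℝ, 0 ≤ x ∧ (1 + a * Real.exp (-x / b)) * x = y := by
  set f : ℝ → ℝ := fun x => (1 + a * Real.exp (-x / b)) * x with hf
  have hcont : Continuous f := by fun_prop
  have he2 : Real.exp 1 ^ 2 = Real.exp 2 := by
    rw [sq, ← Real.exp_add]; norm_num
  -- derivative
  have hderiv : ∀ x : ℝ, HasDerivAt f (1 + a * Real.exp (-x / b) * (1 - x / b)) x := by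
    intro x
    have h1 : HasDerivAt (fun x : ℝ => -x / b) (-1 / b) x := by
      simpa using (hasDerivAt_id x).neg.div_const b
    have h2 : HasDerivAt (fun x : ℝ => Real.exp (-x / b)) (Real.exp (-x / b) * (-1 / b)) x :=
      h1.exp
    have h3 : HasDerivAt (fun x : ℝ => 1 + a * Real.exp (-x / b))
        (a * (Real.exp (-x / b) * (-1 / b))) x := ((h2.const_mul a).const_add 1)
    have h4 := h3.mul (hasDerivAt_id x)
    refine HasDerivAt.congr_deriv h4 ?_
    simp only [id]
    ring
  -- derivative positive away from 2b
  have hpos : ∀ x : ℝ, x ≠ 2 * b → 0 < 1 + a * Real.exp (-x / b) * (1 - x / b) := by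
    intro x hx
    set t := x / b with htdef
    have ht : t ≠ 2 := by
      intro h
      exact hx (by have := (div_eq_iff hb.ne').mp h; linarith)
    have hk : (t - 1) * Real.exp (-t) < Real.exp (-2) := key_ineq t ht
    have hneg : -x / b = -t := by rw [htdef]; ring
    rw [hneg]
    rcases eq_or_lt_of_le ha1 with h0 | h0
    · rw [← h0]; norm_num
    · have h5 : a * ((t - 1) * Real.exp (-t)) < a * Real.exp (-2) :=
        mul_lt_mul_of_pos_left hk h0
      have h6 : a * Real.exp (-2) ≤ Real.exp 2 * Real.exp (-2) := by
        apply mul_le_mul_of_nonneg_right _ (Real.exp_pos _).le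
        rwa [← he2]
      have h7 : Real.exp 2 * Real.exp (-2) = 1 := by
        rw [← Real.exp_add]; norm_num
      nlinarith [Real.exp_pos (-t)]
  have hderiveq : ∀ x : ℝ, deriv f x = 1 + a * Real.exp (-x / b) * (1 - x / b) :=
    fun x => (hderiv x).deriv
  -- strict mono on pieces
  have h1 : StrictMonoOn f (Set.Icc 0 (2 * b)) := by
    apply strictMonoOn_of_deriv_pos (convex_Icc _ _) hcont.continuousOn
    intro x hx
    rw [interior_Icc] at hx
    rw [hderiveq]
    exact hpos x (ne_of_lt hx.2)
  have h2 : StrictMonoOn f (Set.Ici (2 * b)) := by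
    apply strictMonoOn_of_deriv_pos (convex_Ici _) hcont.continuousOn
    intro x hx
    rw [interior_Ici] at hx
    rw [hderiveq]
    exact hpos x (ne_of_gt hx)
  have hmono : StrictMonoOn f (Set.Ici 0) := by
    intro x hx z hz hxz
    simp only [Set.mem_Ici] at hx hz
    rcases le_or_gt z (2 * b) with hz2 | hz2
    · exact h1 ⟨hx, by linarith⟩ ⟨hz, hz2⟩ hxz
    · rcases le_or_gt (2 * b) x with hx2 | hx2
      · exact h2 hx2 (Set.mem_Ici.mpr hz2.le) hxz
      · calc f x < f (2 * b) := h1 ⟨hx, hx2.le⟩ ⟨by linarith, le_refl _⟩ hx2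
          _ < f z := h2 (Set.mem_Ici.mpr (le_refl _)) hz2.le hz2
  -- existence via IVT
  have hf0 : f 0 = 0 := by simp [hf]
  have hfy : y ≤ f y := by
    show y ≤ (1 + a * Real.exp (-y / b)) * y
    have := Real.exp_pos (-y / b)
    have : 0 ≤ a * Real.exp (-y / b) := mul_nonneg ha1 this.le
    nlinarith
  have hmem : y ∈ Set.Icc (f 0) (f y) := ⟨by rw [hf0]; exact hy, hfy⟩
  obtain ⟨x, hxI, hfx⟩ := intermediate_value_Icc hy hcont.continuousOn hmem
  refine ⟨x, ⟨hxI.1, hfx⟩, ?_⟩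
  rintro z ⟨hz, hfz⟩
  exact hmono.injOn hz hxI.1 (hfz.trans hfx.symm)
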